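/- For n ≥ 2, the sum over all derangements σ of [n] of (-1)^{inv(σ)} x^{exc(σ)} equals (-1)^{n-1}(x + x² + ⋯ + x^{n-1}). -/

import Mathlib

open Finset

/-- Number of inversions of a permutation: pairs i < j with σ i > σ j. -/
def inv {n : ℕ} (σ : Equiv.Perm (Fin n)) : ℕ :=
  (Finset.univ.filter fun p : Fin n × Fin n => p.1 < p.2 ∧ σ p.2 < σ p.1).card

/-- Set of excedance indices of a permutation. -/
def excIdx {n : ℕ} (σ : Equiv.Perm (Fin n)) : Finset (Fin n) :=
  Finset.univ.filter fun i => i < σ i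

section Det
open Matrix
variable {R : Type*} [CommRing R] (x : R) (n : ℕ)

/-- lower triangular factor -/
def Amat : Matrix (Fin n) (Fin n) R :=
  Matrix.of fun i j => if i = j then -1 else if j < i then x - 1 else 0

/-- the excedance matrix -/
def Mmat : Matrix (Fin n) (Fin n) R :=
  Matrix.of fun i j => if i = j then 0 else if j < i then x else 1

lemma Amat_mulVec : Amat x n *ᵥ (fun i : Fin n => -(x ^ (i : ℕ))) = 1 := by
  funext i
  show ∑ j, Amat x n i j * (-(x ^ (j : ℕ))) = 1
  have split : ∀ j : Fin n, Amat x n i j * (-(x ^ (j : ℕ)))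
      = (if j = i then x ^ (i : ℕ) else 0) + (if j < i then (1 - x) * x ^ (j : ℕ) else 0) := by
    intro j
    rcases lt_trichotomy j i with h | h | h
    · rw [if_neg h.ne, if_pos h]
      simp only [Amat, Matrix.of_apply, if_neg (fun he : i = j => h.ne he.symm), if_pos h]
      ring
    · simp [Amat, h]
    · rw [if_neg h.ne', if_neg (not_lt_of_gt h)]
      simp only [Amat, Matrix.of_apply, if_neg (fun he : i = j => h.ne' he.symm),
        if_neg (not_lt_of_gt h)]
      ring
  rw [Finset.sum_congr rfl fun j _ => split j, Finset.sum_add_distrib,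
    Finset.sum_ite_eq' Finset.univ i, if_pos (Finset.mem_univ i)]
  have hpull : (∑ j : Fin n, if j < i then (1 - x) * x ^ (j : ℕ) else 0)
      = (1 - x) * ∑ j : Fin n, if j < i then x ^ (j : ℕ) else 0 := by
    rw [Finset.mul_sum]
    exact Finset.sum_congr rfl fun j _ => by split <;> simp
  rw [hpull]
  have h1 : (∑ j : Fin n, if j < i then x ^ (j : ℕ) else 0) = ∑ k ∈ Finset.range i, x ^ k := by
    simp only [Fin.lt_iff_val_lt_val]
    rw [Fin.sum_univ_eq_sum_range (fun k => if k < (i : ℕ) then x ^ k else 0) n]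
    · rw [← Finset.sum_filter]
      congr 1
      ext k
      simp only [Finset.mem_filter, Finset.mem_range]
      constructor
      · exact fun h => h.2
      · exact fun h => ⟨h.trans i.isLt, h⟩
  rw [h1]
  have := geom_sum_mul x (i : ℕ)
  have hgeom : (1 - x) * ∑ k ∈ Finset.range (i : ℕ), x ^ k = 1 - x ^ (i : ℕ) := by
    have h2 := geom_sum_mul x (i : ℕ)
    calc (1 - x) * ∑ k ∈ Finset.range (i : ℕ), x ^ k
        = -((∑ k ∈ Finset.range (i : ℕ), x ^ k) * (x - 1)) := by ring
      _ = 1 - x ^ (i : ℕ) := by rw [h2]; ring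
  rw [hgeom]
  show _ = (1 : Fin n → R) i
  simp

lemma Amat_det : (Amat x n).det = (-1) ^ n := by
  rw [Matrix.det_of_lowerTriangular (Amat x n)
    (by intro i j h; simp only [OrderDual.toDual_lt_toDual] at h
        simp [Amat, (h.ne : i ≠ j), not_lt_of_gt h])]
  simp [Amat]

lemma Mmat_eq : Mmat x n = Amat x n * (1 + @HMul.hMul _ _ (Matrix (Fin n) (Fin n) R) Matrix.instHMulOfFintypeOfMulOfAddCommMonoid (Matrix.replicateCol Unit (fun i : Fin n => -(x ^ (i : ℕ)))) (Matrix.replicateRow Unit 1)) := by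
  rw [Matrix.mul_add, Matrix.mul_one, ← Matrix.mul_assoc, ← Matrix.replicateCol_mulVec, Amat_mulVec]
  ext i j
  have : (@HMul.hMul _ _ (Matrix (Fin n) (Fin n) R) Matrix.instHMulOfFintypeOfMulOfAddCommMonoid (Matrix.replicateCol Unit (1 : Fin n → R)) (Matrix.replicateRow Unit (1 : Fin n → R))) i j = 1 := by
    simp [Matrix.mul_apply]
  rw [Matrix.add_apply, this]
  rcases lt_trichotomy i j with h | h | h
  · simp [Mmat, Amat, h.ne, not_lt_of_gt h]
  · simp [Mmat, Amat, h]
  · simp [Mmat, Amat, h.ne', h, not_lt_of_gt h]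

lemma Mmat_det : (Mmat x n).det = (-1) ^ n * (1 - ∑ k ∈ Finset.range n, x ^ k) := by
  rw [Mmat_eq, Matrix.det_mul, Amat_det, Matrix.det_one_add_replicateCol_mul_replicateRow]
  congr 1
  rw [← Fin.sum_univ_eq_sum_range (fun k => x ^ k) n]
  simp [dotProduct]
  ring
end Det

lemma mySign_eq_signAux {n : ℕ} (σ : Equiv.Perm (Fin n)) :
    Equiv.Perm.sign σ = Equiv.Perm.signAux σ := by
  refine Equiv.Perm.swap_induction_on σ (by simp [Equiv.Perm.signAux_one]) ?_
  intro f x y hxy ih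
  rw [Equiv.Perm.sign_mul, Equiv.Perm.signAux_mul, ih, Equiv.Perm.sign_swap hxy,
    Equiv.Perm.signAux_swap hxy]

lemma mySign_eq_pow_inv {n : ℕ} (σ : Equiv.Perm (Fin n)) :
    Equiv.Perm.sign σ = (-1 : ℤˣ) ^ inv σ := by
  rw [mySign_eq_signAux]
  unfold Equiv.Perm.signAux
  rw [Finset.prod_ite, Finset.prod_const, Finset.prod_const_one, mul_one]
  congr 1
  unfold _root_.inv
  apply Finset.card_bij (fun (x : Σ _ : Fin n, Fin n) _ => (x.2, x.1))
  · rintro ⟨a, b⟩ ha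
    rw [Finset.mem_filter, Equiv.Perm.mem_finPairsLT] at ha
    obtain ⟨hba, hle⟩ := ha
    simp only [Finset.mem_filter, Finset.mem_univ, true_and]
    exact ⟨hba, lt_of_le_of_ne hle (σ.injective.ne hba.ne')⟩
  · rintro ⟨a, b⟩ ha ⟨c, d⟩ hc h
    simp only [Prod.mk.injEq] at h
    exact Sigma.ext h.2 (heq_of_eq h.1)
  · rintro ⟨a, b⟩ hb
    rw [Finset.mem_filter] at hb
    obtain ⟨-, hab, hlt⟩ := hb
    exact ⟨⟨b, a⟩, by rw [Finset.mem_filter, Equiv.Perm.mem_finPairsLT]; exact ⟨hab, hlt.le⟩, rfl⟩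

theorem stmt1 {R : Type*} [CommRing R] (x : R) (n : ℕ) (hn : 2 ≤ n) :
    ∑ σ ∈ Finset.univ.filter (fun σ : Equiv.Perm (Fin n) => ∀ i, σ i ≠ i),
      (-1 : R) ^ inv σ * x ^ (excIdx σ).card
    = (-1 : R) ^ (n - 1) * (∑ k ∈ Finset.Icc 1 (n - 1), x ^ k) := by
  classical
  have key : (Mmat x n).det
      = ∑ σ ∈ Finset.univ.filter (fun σ : Equiv.Perm (Fin n) => ∀ i, σ i ≠ i),
        (-1 : R) ^ inv σ * x ^ (excIdx σ).card := by
    rw [Matrix.det_apply', Finset.sum_filter]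
    refine Finset.sum_congr rfl fun σ _ => ?_
    by_cases h : ∀ i, σ i ≠ i
    · rw [if_pos h]
      have hprod : (∏ i, Mmat x n (σ i) i) = x ^ (excIdx σ).card := by
        have : ∀ i : Fin n, Mmat x n (σ i) i = if i < σ i then x else 1 := by
          intro i
          simp only [Mmat, Matrix.of_apply, if_neg (h i)]
        rw [Finset.prod_congr rfl fun i _ => this i, Finset.prod_ite, Finset.prod_const,
          Finset.prod_const_one, mul_one, excIdx]
      rw [hprod]
      congr 1
      rw [mySign_eq_pow_inv]
      push_cast
      simp
    · rw [if_neg h]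
      push_neg at h
      obtain ⟨i, hi⟩ := h
      rw [Finset.prod_eq_zero (Finset.mem_univ i) (by simp [Mmat, hi]), mul_zero]
  rw [← key, Mmat_det]
  obtain ⟨m, rfl⟩ : ∃ m, n = m + 2 := ⟨n - 2, by omega⟩
  have hrange : Finset.range (m + 2) = insert 0 (Finset.Icc 1 (m + 2 - 1)) := by
    ext k
    simp only [Finset.mem_range, Finset.mem_insert, Finset.mem_Icc]
    omega
  rw [hrange, Finset.sum_insert (by simp)]
  simp only [pow_zero]
  rw [show m + 2 - 1 = m + 1 from rfl]
  ring
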